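/- Let K be a consistent belief set and let ⊙ be an operator on K satisfying, for all sentences α, β: weak relative success (α ∈ K⊙α or K⊙α ⊆ K), closure (K⊙α = Cn(K⊙α)), inclusion (K⊙α ⊆ K + α), consistency preservation (if K is consistent then K⊙α is consistent), vacuity (if ¬α ∉ K then K + α ⊆ K⊙α), extensionality (if ⊢ α ↔ β then K⊙α = K⊙β), strict improvement (if α ∈ K⊙α and ⊢ α → β then β ∈ K⊙β), N-persistence (if ¬β ∈ K⊙β then ¬β ∈ K⊙α for all α), N-recovery (K ⊆ (K⊙α) + ¬α), disjunctive overlap (K⊙α ∩ K⊙β ⊆ K⊙(α ∨ β)) and disjunctive inclusion (if ¬α ∉ K⊙(α ∨ β) then K⊙(α ∨ β) ⊆ K⊙α). Let 𝕊 be the collection of all sets S of possible worlds such that either S = ‖K‖, or (∅ ≠ S ⊆ {w : w ∈ ‖K⊙α‖ for some α with ‖K⊙α‖ ∩ ‖α‖ ≠ ∅}, ‖K⊙α‖ ⊆ S for every α with S ∩ ‖α‖ ≠ ∅, and for every α with S ∩ ‖α‖ = ∅, if S ∉ 𝕊_i then ‖K⊙α‖ ∩ S = ‖K‖), where 𝕊_i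 is the collection of all sets S of possible worlds such that either S = ‖K‖, or (∅ ≠ S ⊆ {w : w ∈ ‖K⊙α‖ for some α with ‖K⊙α‖ ⊆ ‖α‖} and ‖K⊙α‖ ⊆ S for every α with S ∩ ‖α‖ ≠ ∅). Then for every sentence α with ¬α ∉ K⊙α, the set S(α) = ⋃{‖K⊙δ‖ : ‖α‖ ⊆ ‖δ‖} belongs to 𝕊, and S(α) is the ⊆-smallest member of 𝕊 that intersects ‖α‖. -/

import Mathlib

/-- A propositional language `L`: a type of sentences closed under the
truth-functional connectives, together with a consequence operator `Cn`
satisfying inclusion, monotony, iteration, supraclassicality, compactness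
and deduction. Supraclassicality is expressed via Boolean valuations that
respect the connectives. -/
structure PropLanguage where
  Sentence : Type
  falsum : Sentence
  neg : Sentence → Sentence
  conj : Sentence → Sentence → Sentence
  disj : Sentence → Sentence → Sentence
  impl : Sentence → Sentence → Sentence
  biimpl : Sentence → Sentence → Sentence
  Cn : Set Sentence → Set Sentence
  cn_inclusion : ∀ A : Set Sentence, A ⊆ Cn A
  cn_monotony : ∀ A B : Set Sentence, A ⊆ B → Cn A ⊆ Cn B
  cn_iteration : ∀ A : Set Sentence, Cn (Cn A) = Cn A
  cn_supraclassical : ∀ (A : Set Sentence) (α : Sentence),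
    (∀ v : Sentence → Bool,
        v falsum = false →
        (∀ β, v (neg β) = !v β) →
        (∀ β γ, v (conj β γ) = (v β && v γ)) →
        (∀ β γ, v (disj β γ) = (v β || v γ)) →
        (∀ β γ, v (impl β γ) = (!v β || v γ)) →
        (∀ β γ, v (biimpl β γ) = (v β == v γ)) →
        (∀ β ∈ A, v β = true) → v α = true) →
    α ∈ Cn A
  cn_compact : ∀ (A : Set Sentence) (α : Sentence), α ∈ Cn A →
    ∃ A' : Set Sentence, A' ⊆ A ∧ A'.Finite ∧ α ∈ Cn A'
  cn_deduction : ∀ (A : Set Sentence) (α β : Sentence),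
    β ∈ Cn (A ∪ {α}) ↔ impl α β ∈ Cn A

namespace PropLanguage

variable (L : PropLanguage)

/-- A set of sentences is consistent iff it does not entail falsum. -/
def Consistent (A : Set L.Sentence) : Prop := L.falsum ∉ L.Cn A

/-- A belief set: a logically closed set of sentences. -/
def IsBeliefSet (K : Set L.Sentence) : Prop := K = L.Cn K

/-- Expansion: `K + α = Cn (K ∪ {α})`. -/
def expand (K : Set L.Sentence) (α : L.Sentence) : Set L.Sentence :=
  L.Cn (K ∪ {α})

/-- A possible world: a maximal consistent set of sentences. -/
def IsWorld (M : Set L.Sentence) : Prop :=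
  L.Consistent M ∧ ∀ M' : Set L.Sentence, L.Consistent M' → M ⊆ M' → M' = M

/-- `‖R‖`: the set of possible worlds containing `R`. -/
def worldsOf (R : Set L.Sentence) : Set (Set L.Sentence) :=
  {M | L.IsWorld M ∧ R ⊆ M}

/-- `‖α‖`: the set of possible worlds containing `Cn {α}`. -/
def wS (α : L.Sentence) : Set (Set L.Sentence) := L.worldsOf (L.Cn {α})

/-- `⋂ X`: the set of sentences belonging to every world in `X`. -/
def th (X : Set (Set L.Sentence)) : Set L.Sentence := {φ | ∀ M ∈ X, φ ∈ M}

/-! ### Postulates for an operator `od` on a belief set `K` -/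

/-- Weak relative success: `α ∈ K⊙α` or `K⊙α ⊆ K`. -/
def WeakRelativeSuccess (K : Set L.Sentence) (od : L.Sentence → Set L.Sentence) : Prop :=
  ∀ α, α ∈ od α ∨ od α ⊆ K

/-- Closure: `K⊙α = Cn (K⊙α)`. -/
def Closure (od : L.Sentence → Set L.Sentence) : Prop :=
  ∀ α, od α = L.Cn (od α)

/-- Inclusion: `K⊙α ⊆ K + α`. -/
def Inclusion (K : Set L.Sentence) (od : L.Sentence → Set L.Sentence) : Prop :=
  ∀ α, od α ⊆ L.expand K α

/-- Consistency preservation: if `K` is consistent then `K⊙α` is consistent. -/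
def ConsistencyPreservation (K : Set L.Sentence) (od : L.Sentence → Set L.Sentence) : Prop :=
  L.Consistent K → ∀ α, L.Consistent (od α)

/-- Vacuity: if `¬α ∉ K` then `K + α ⊆ K⊙α`. -/
def Vacuity (K : Set L.Sentence) (od : L.Sentence → Set L.Sentence) : Prop :=
  ∀ α, L.neg α ∉ K → L.expand K α ⊆ od α

/-- Weak vacuity: if `¬α ∉ K` then `K ⊆ K⊙α`. -/
def WeakVacuity (K : Set L.Sentence) (od : L.Sentence → Set L.Sentence) : Prop :=
  ∀ α, L.neg α ∉ K → K ⊆ od α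

/-- Extensionality: if `⊢ α ↔ β` then `K⊙α = K⊙β`. -/
def Extensionality (od : L.Sentence → Set L.Sentence) : Prop :=
  ∀ α β, L.biimpl α β ∈ L.Cn ∅ → od α = od β

/-- Strict improvement: if `α ∈ K⊙α` and `⊢ α → β` then `β ∈ K⊙β`. -/
def StrictImprovement (od : L.Sentence → Set L.Sentence) : Prop :=
  ∀ α β, α ∈ od α → L.impl α β ∈ L.Cn ∅ → β ∈ od β

/-- N-persistence: if `¬β ∈ K⊙β` then `¬β ∈ K⊙α` for all `α`. -/
def NPersistence (od : L.Sentence → Set L.Sentence) : Prop :=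
  ∀ α β, L.neg β ∈ od β → L.neg β ∈ od α

/-- N-recovery: `K ⊆ (K⊙α) + ¬α`. -/
def NRecovery (K : Set L.Sentence) (od : L.Sentence → Set L.Sentence) : Prop :=
  ∀ α, K ⊆ L.expand (od α) (L.neg α)

/-- Disjunctive overlap: `K⊙α ∩ K⊙β ⊆ K⊙(α ∨ β)`. -/
def DisjunctiveOverlap (od : L.Sentence → Set L.Sentence) : Prop :=
  ∀ α β, od α ∩ od β ⊆ od (L.disj α β)

/-- Disjunctive inclusion: if `¬α ∉ K⊙(α ∨ β)` then `K⊙(α ∨ β) ⊆ K⊙α`. -/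
def DisjunctiveInclusion (od : L.Sentence → Set L.Sentence) : Prop :=
  ∀ α β, L.neg α ∉ od (L.disj α β) → od (L.disj α β) ⊆ od α

/-- Weak disjunctive inclusion: if `¬α ∉ K⊙(α ∨ β)` then
`(K⊙(α ∨ β)) + (α ∨ β) ⊆ (K⊙α) + α`. -/
def WeakDisjunctiveInclusion (od : L.Sentence → Set L.Sentence) : Prop :=
  ∀ α β, L.neg α ∉ od (L.disj α β) →
    L.expand (od (L.disj α β)) (L.disj α β) ⊆ L.expand (od α) α

/-! ### AGM revision and two level credibility-limited revision -/

/-- An AGM revision on `K`: postulates (⋆1)–(⋆8). -/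
def IsAGMRevision (K : Set L.Sentence) (star : L.Sentence → Set L.Sentence) : Prop :=
  (∀ α, star α = L.Cn (star α)) ∧
  (∀ α, α ∈ star α) ∧
  (∀ α, star α ⊆ L.expand K α) ∧
  (∀ α, L.neg α ∉ K → L.expand K α ⊆ star α) ∧
  (∀ α, L.Consistent {α} → L.Consistent (star α)) ∧
  (∀ α β, L.biimpl α β ∈ L.Cn ∅ → star α = star β) ∧
  (∀ α β, star α ∩ star β ⊆ star (L.disj α β)) ∧
  (∀ α β, L.neg α ∉ star (L.disj α β) → star (L.disj α β) ⊆ star α)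

/-- `od` is the two level CL revision operator induced by `star`, `CH`, `CL`:
`K⊙α = K⋆α` if `α ∈ C_H`; `K⊙α = (K⋆α) ∩ K` if `α ∈ C_L`;
`K⊙α = K` if `α ∉ C_H ∪ C_L`. -/
def IsTwoLevelCL (K : Set L.Sentence) (od star : L.Sentence → Set L.Sentence)
    (CH CL : Set L.Sentence) : Prop :=
  ∀ α, (α ∈ CH → od α = star α) ∧ (α ∈ CL → od α = star α ∩ K) ∧
    (α ∉ CH ∪ CL → od α = K)

/-- Credibility of logical equivalents. -/
def CredLogEquiv (C : Set L.Sentence) : Prop :=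
  ∀ α β, L.biimpl α β ∈ L.Cn ∅ → (α ∈ C ↔ β ∈ C)

/-- Single sentence closure. -/
def SingleSentenceClosure (C : Set L.Sentence) : Prop :=
  ∀ α ∈ C, L.Cn {α} ⊆ C

/-- Element consistency. -/
def ElementConsistency (C : Set L.Sentence) : Prop :=
  ∀ α ∈ C, L.Consistent {α}

/-- Credibility lower bounding (w.r.t. `K`). -/
def CredLowerBound (K C : Set L.Sentence) : Prop :=
  L.Consistent K → K ⊆ C

/-- Condition (C - ⋆): if `α ∉ C` and `β ∈ C` then `¬α ∈ K⋆β`. -/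
def CondCStar (K : Set L.Sentence) (star : L.Sentence → Set L.Sentence)
    (C : Set L.Sentence) : Prop :=
  ∀ α β, α ∉ C → β ∈ C → L.neg α ∈ star β

/-! ### Two level systems of spheres -/

/-- `(Si, S)` is a two level system of spheres centred on `‖K‖`. -/
def IsTwoLevelSystem (K : Set L.Sentence)
    (Si S : Set (Set (Set L.Sentence))) : Prop :=
  (∀ X ∈ S, ∀ M ∈ X, L.IsWorld M) ∧
  (∀ U ∈ S, ∀ V ∈ S, U ⊆ V ∨ V ⊆ U) ∧
  (∀ U ∈ Si, ∀ V ∈ Si, U ⊆ V ∨ V ⊆ U) ∧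
  L.worldsOf K ∈ S ∧ (∀ U ∈ S, L.worldsOf K ⊆ U) ∧
  L.worldsOf K ∈ Si ∧ (∀ U ∈ Si, L.worldsOf K ⊆ U) ∧
  (∀ α, (∃ U ∈ S, (U ∩ L.wS α).Nonempty) →
    ∃ U ∈ S, (U ∩ L.wS α).Nonempty ∧ ∀ V ∈ S, (V ∩ L.wS α).Nonempty → U ⊆ V) ∧
  (∀ α, (∃ U ∈ Si, (U ∩ L.wS α).Nonempty) →
    ∃ U ∈ Si, (U ∩ L.wS α).Nonempty ∧ ∀ V ∈ Si, (V ∩ L.wS α).Nonempty → U ⊆ V) ∧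
  Si ⊆ S ∧
  (∀ X ∈ Si, ∀ Y ∈ S, Y ∉ Si → X ⊆ Y)

/-- `od` is the system of spheres-based two level CL revision operator induced
by `(Si, S)` (centred on `‖K‖`): if `S_α` (the smallest sphere of `S` meeting
`‖α‖`) is in `Si` then `K⊙α = ⋂(S_α ∩ ‖α‖)`; if `S_α ∈ S \ Si` then
`K⊙α = ⋂(‖K‖ ∪ (S_α ∩ ‖α‖))`; and if no sphere of `S` meets `‖α‖` then
`K⊙α = K`. -/
def IsSphereRevision (K : Set L.Sentence)
    (Si S : Set (Set (Set L.Sentence)))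
    (od : L.Sentence → Set L.Sentence) : Prop :=
  ∀ α,
    (∀ Sa ∈ S, (Sa ∩ L.wS α).Nonempty →
      (∀ V ∈ S, (V ∩ L.wS α).Nonempty → Sa ⊆ V) →
      (Sa ∈ Si → od α = L.th (Sa ∩ L.wS α)) ∧
      (Sa ∉ Si → od α = L.th (L.worldsOf K ∪ (Sa ∩ L.wS α)))) ∧
    ((∀ X ∈ S, X ∩ L.wS α = ∅) → od α = K)

end PropLanguage

namespace PropLanguage

variable {L : PropLanguage}

/-- A Boolean valuation respecting the connectives. -/
def IsVal (L : PropLanguage) (v : L.Sentence → Bool) : Prop :=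
  v L.falsum = false ∧ (∀ β, v (L.neg β) = !v β) ∧
  (∀ β γ, v (L.conj β γ) = (v β && v γ)) ∧
  (∀ β γ, v (L.disj β γ) = (v β || v γ)) ∧
  (∀ β γ, v (L.impl β γ) = (!v β || v γ)) ∧
  (∀ β γ, v (L.biimpl β γ) = (v β == v γ))

lemma sup' {A : Set L.Sentence} {α : L.Sentence}
    (h : ∀ v, L.IsVal v → (∀ β ∈ A, v β = true) → v α = true) : α ∈ L.Cn A :=
  L.cn_supraclassical A α (fun v h1 h2 h3 h4 h5 h6 hA => h v ⟨h1, h2, h3, h4, h5, h6⟩ hA)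

lemma taut0 {A : Set L.Sentence} {χ : L.Sentence}
    (h : ∀ v, L.IsVal v → v χ = true) : χ ∈ L.Cn A :=
  sup' (fun v hv _ => h v hv)

lemma taut1 {A : Set L.Sentence} {φ χ : L.Sentence} (hφ : φ ∈ L.Cn A)
    (h : ∀ v, L.IsVal v → v φ = true → v χ = true) : χ ∈ L.Cn A := by
  rw [← L.cn_iteration A]
  exact sup' (fun v hv hA => h v hv (hA φ hφ))

lemma taut2 {A : Set L.Sentence} {φ ψ χ : L.Sentence} (hφ : φ ∈ L.Cn A) (hψ : ψ ∈ L.Cn A)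
    (h : ∀ v, L.IsVal v → v φ = true → v ψ = true → v χ = true) : χ ∈ L.Cn A := by
  rw [← L.cn_iteration A]
  exact sup' (fun v hv hA => h v hv (hA φ hφ) (hA ψ hψ))

lemma taut3 {A : Set L.Sentence} {φ ψ ρ χ : L.Sentence} (hφ : φ ∈ L.Cn A) (hψ : ψ ∈ L.Cn A)
    (hρ : ρ ∈ L.Cn A)
    (h : ∀ v, L.IsVal v → v φ = true → v ψ = true → v ρ = true → v χ = true) : χ ∈ L.Cn A := by
  rw [← L.cn_iteration A]
  exact sup' (fun v hv hA => h v hv (hA φ hφ) (hA ψ hψ) (hA ρ hρ))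

lemma mem_cn {A : Set L.Sentence} {φ : L.Sentence} (h : φ ∈ A) : φ ∈ L.Cn A :=
  L.cn_inclusion A h

/-- If adding `φ` to `A` is inconsistent, then `¬φ ∈ Cn A`. -/
lemma neg_of_incons {A : Set L.Sentence} {φ : L.Sentence}
    (h : L.falsum ∈ L.Cn (A ∪ {φ})) : L.neg φ ∈ L.Cn A := by
  have h' : L.impl φ L.falsum ∈ L.Cn A := (L.cn_deduction A φ L.falsum).mp h
  refine taut1 h' ?_
  rintro v ⟨b0, bn, bc, bd, bi, bb⟩ h1
  rw [bi] at h1; rw [bn]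
  simpa [b0] using h1

/-- If `¬φ ∉ Cn A`, then `A ∪ {φ}` is consistent. -/
lemma consistent_insert {A : Set L.Sentence} {φ : L.Sentence}
    (h : L.neg φ ∉ L.Cn A) : L.Consistent (A ∪ {φ}) :=
  fun hc => h (neg_of_incons hc)

/-- Lindenbaum: every consistent set extends to a possible world. -/
lemma lindenbaum {A : Set L.Sentence} (h : L.Consistent A) :
    ∃ M, L.IsWorld M ∧ A ⊆ M := by
  have hz := zorn_subset_nonempty {B : Set L.Sentence | A ⊆ B ∧ L.Consistent B}
    ?_ A ⟨subset_rfl, h⟩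
  · obtain ⟨M, hAM, hMmem, hMmax⟩ := hz
    refine ⟨M, ⟨hMmem.2, ?_⟩, hAM⟩
    intro M' hM' hMM'
    exact (hMmax (y := M') ⟨hAM.trans hMM', hM'⟩ hMM').antisymm hMM' |>.symm ▸ rfl
  · intro c hcS hchain hcne
    refine ⟨⋃₀ c, ⟨?_, ?_⟩, fun s hs => Set.subset_sUnion_of_mem hs⟩
    · obtain ⟨t, ht⟩ := hcne
      exact (hcS ht).1.trans (Set.subset_sUnion_of_mem ht)
    · intro hbot
      obtain ⟨A', hA'sub, hA'fin, hA'⟩ := L.cn_compact _ _ hbot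
      -- a finite subset of the union of a nonempty chain lies in some member
      have key : ∀ (F : Set L.Sentence), F.Finite → F ⊆ ⋃₀ c → ∃ t ∈ c, F ⊆ t := by
        intro F hF
        refine Set.Finite.induction_on
          (motive := fun F _ => F ⊆ ⋃₀ c → ∃ t ∈ c, F ⊆ t) F hF ?_ ?_
        · intro _
          obtain ⟨t, ht⟩ := hcne
          exact ⟨t, ht, Set.empty_subset t⟩
        · intro a s _ _ ih hsub
          obtain ⟨t, htc, hts⟩ := ih (fun x hx => hsub (Set.mem_insert_of_mem a hx))
          obtain ⟨u, huc, hau⟩ := hsub (Set.mem_insert a s)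
          rcases hchain.total htc huc with hh | hh
          · exact ⟨u, huc, Set.insert_subset hau (hts.trans hh)⟩
          · exact ⟨t, htc, Set.insert_subset (hh hau) hts⟩
      obtain ⟨t, htc, hts⟩ := key A' hA'fin hA'sub
      exact (hcS htc).2 (L.cn_monotony _ _ hts hA')

/-- A world is deductively closed. -/
lemma IsWorld.closed {M : Set L.Sentence} (hM : L.IsWorld M) : L.Cn M = M := by
  refine Set.Subset.antisymm ?_ (L.cn_inclusion M)
  intro ψ hψ
  have hcons : L.Consistent (M ∪ {ψ}) := by
    intro hc
    have : L.Cn (M ∪ {ψ}) ⊆ L.Cn (L.Cn M) :=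
      L.cn_monotony _ _ (Set.union_subset (L.cn_inclusion M) (by simpa using hψ))
    rw [L.cn_iteration] at this
    exact hM.1 (this hc)
  have := hM.2 (M ∪ {ψ}) hcons Set.subset_union_left
  rw [← this]; exact Set.mem_union_right _ rfl

lemma IsWorld.mem_of_cn {M : Set L.Sentence} (hM : L.IsWorld M) {φ : L.Sentence}
    (h : φ ∈ L.Cn M) : φ ∈ M := hM.closed ▸ h

lemma IsWorld.not_mem_both {M : Set L.Sentence} (hM : L.IsWorld M) {φ : L.Sentence}
    (h1 : φ ∈ M) (h2 : L.neg φ ∈ M) : False := by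
  apply hM.1
  refine taut2 (mem_cn h1) (mem_cn h2) ?_
  rintro v ⟨b0, bn, bc, bd, bi, bb⟩ hv1 hv2
  rw [bn, hv1] at hv2; simp at hv2

lemma IsWorld.mem_or_neg {M : Set L.Sentence} (hM : L.IsWorld M) (φ : L.Sentence) :
    φ ∈ M ∨ L.neg φ ∈ M := by
  by_cases h : L.neg φ ∈ L.Cn M
  · exact Or.inr (hM.mem_of_cn h)
  · left
    have hc := consistent_insert h
    have := hM.2 (M ∪ {φ}) hc Set.subset_union_left
    rw [← this]; exact Set.mem_union_right _ rfl

lemma IsWorld.neg_mem_iff {M : Set L.Sentence} (hM : L.IsWorld M) {φ : L.Sentence} :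
    L.neg φ ∈ M ↔ φ ∉ M :=
  ⟨fun h hφ => hM.not_mem_both hφ h, fun h => (hM.mem_or_neg φ).resolve_left h⟩

/-- Completeness: `φ ∈ Cn A` iff `φ` holds in all worlds containing `A`. -/
lemma mem_cn_iff_worlds {A : Set L.Sentence} {φ : L.Sentence} :
    φ ∈ L.Cn A ↔ ∀ M, L.IsWorld M → A ⊆ M → φ ∈ M := by
  constructor
  · intro h M hM hAM
    exact hM.mem_of_cn (L.cn_monotony A M hAM h)
  · intro h
    by_contra hφ
    have hnn : L.neg (L.neg φ) ∉ L.Cn A := by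
      intro hc
      apply hφ
      refine taut1 hc ?_
      rintro v ⟨b0, bn, bc, bd, bi, bb⟩ h1
      rw [bn, bn] at h1; simpa using h1
    obtain ⟨M, hM, hsub⟩ := lindenbaum (consistent_insert hnn)
    have hnφ : L.neg φ ∈ M := hsub (Set.mem_union_right _ rfl)
    exact hM.not_mem_both (h M hM (Set.subset_union_left.trans hsub)) hnφ

lemma mem_wS_iff {M : Set L.Sentence} {φ : L.Sentence} :
    M ∈ L.wS φ ↔ L.IsWorld M ∧ φ ∈ M := by
  constructor
  · rintro ⟨hM, hsub⟩
    exact ⟨hM, hsub (L.cn_inclusion _ rfl)⟩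
  · rintro ⟨hM, hφ⟩
    refine ⟨hM, ?_⟩
    intro ψ hψ
    exact hM.mem_of_cn (L.cn_monotony _ _ (by simpa using hφ) hψ)

lemma worldsOf_anti {A B : Set L.Sentence} (h : A ⊆ B) : L.worldsOf B ⊆ L.worldsOf A :=
  fun _ hM => ⟨hM.1, h.trans hM.2⟩

/-- If no world contains both `A` and `φ`, then `¬φ ∈ Cn A`. -/
lemma neg_mem_of_inter_empty {A : Set L.Sentence} {φ : L.Sentence}
    (h : L.worldsOf A ∩ L.wS φ = ∅) : L.neg φ ∈ L.Cn A := by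
  by_contra hc
  obtain ⟨M, hM, hsub⟩ := lindenbaum (consistent_insert hc)
  have : M ∈ L.worldsOf A ∩ L.wS φ :=
    ⟨⟨hM, Set.subset_union_left.trans hsub⟩,
     mem_wS_iff.mpr ⟨hM, hsub (Set.mem_union_right _ rfl)⟩⟩
  rw [h] at this; exact this

/-- If `¬φ ∉ Cn A` then some world contains both `A` and `φ`. -/
lemma inter_nonempty_of_neg_not_mem {A : Set L.Sentence} {φ : L.Sentence}
    (h : L.neg φ ∉ L.Cn A) : (L.worldsOf A ∩ L.wS φ).Nonempty := by
  obtain ⟨M, hM, hsub⟩ := lindenbaum (consistent_insert h)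
  exact ⟨M, ⟨hM, Set.subset_union_left.trans hsub⟩,
    mem_wS_iff.mpr ⟨hM, hsub (Set.mem_union_right _ rfl)⟩⟩

lemma impl_of_wS_subset {α δ : L.Sentence} (h : L.wS α ⊆ L.wS δ) :
    L.impl α δ ∈ L.Cn ∅ := by
  have hδ : δ ∈ L.Cn {α} := by
    rw [mem_cn_iff_worlds]
    intro M hM hsub
    have : M ∈ L.wS α := mem_wS_iff.mpr ⟨hM, hsub rfl⟩
    exact (mem_wS_iff.mp (h this)).2
  have := (L.cn_deduction ∅ α δ).mp (by simpa using hδ)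
  exact this

lemma wS_subset_of_impl {α δ : L.Sentence} (h : L.impl α δ ∈ L.Cn ∅) :
    L.wS α ⊆ L.wS δ := by
  intro M hM
  obtain ⟨hMw, hα⟩ := mem_wS_iff.mp hM
  have himp : L.impl α δ ∈ L.Cn M := L.cn_monotony ∅ M (Set.empty_subset M) h
  refine mem_wS_iff.mpr ⟨hMw, hMw.mem_of_cn (taut2 (mem_cn hα) himp ?_)⟩
  rintro v ⟨b0, bn, bc, bd, bi, bb⟩ h1 h2
  rw [bi, h1] at h2; simpa using h2

end PropLanguage


open PropLanguage in
/-- for the constructed collection `S` and any `α` with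
`¬α ∉ K⊙α`, the set `S(α) = ⋃{‖K⊙δ‖ : ‖α‖ ⊆ ‖δ‖}` belongs to `S` and is the
`⊆`-smallest member of `S` intersecting `‖α‖`. -/
theorem constructed_min_sphere
    (L : PropLanguage) (K : Set L.Sentence)
    (hK : L.IsBeliefSet K) (hKcons : L.Consistent K)
    (od : L.Sentence → Set L.Sentence)
    (h1 : L.WeakRelativeSuccess K od) (h2 : L.Closure od)
    (h3 : L.Inclusion K od) (h4 : L.ConsistencyPreservation K od)
    (h5 : L.Vacuity K od) (h6 : L.Extensionality od)
    (h7 : L.StrictImprovement od) (h8 : L.NPersistence od)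
    (h9 : L.NRecovery K od) (h10 : L.DisjunctiveOverlap od)
    (h11 : L.DisjunctiveInclusion od)
    (Si S : Set (Set (Set L.Sentence)))
    (hSi : Si = {Sp | Sp = L.worldsOf K ∨
      (Sp.Nonempty ∧
       Sp ⊆ {w | ∃ α, w ∈ L.worldsOf (od α) ∧ L.worldsOf (od α) ⊆ L.wS α} ∧
       ∀ α, (Sp ∩ L.wS α).Nonempty → L.worldsOf (od α) ⊆ Sp)})
    (hS : S = {Sp | Sp = L.worldsOf K ∨
      (Sp.Nonempty ∧
       Sp ⊆ {w | ∃ α, w ∈ L.worldsOf (od α) ∧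
                      (L.worldsOf (od α) ∩ L.wS α).Nonempty} ∧
       (∀ α, (Sp ∩ L.wS α).Nonempty → L.worldsOf (od α) ⊆ Sp) ∧
       (∀ α, Sp ∩ L.wS α = ∅ → Sp ∉ Si →
          L.worldsOf (od α) ∩ Sp = L.worldsOf K))}) :
    ∀ α, L.neg α ∉ od α →
      ∀ Sa : Set (Set L.Sentence),
        Sa = {w | ∃ δ, L.wS α ⊆ L.wS δ ∧ w ∈ L.worldsOf (od δ)} →
        Sa ∈ S ∧ (Sa ∩ L.wS α).Nonempty ∧
        ∀ V ∈ S, (V ∩ L.wS α).Nonempty → Sa ⊆ V := by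
  intro α hα Sa hSa
  subst hSa
  have hKcl : L.Cn K = K := hK.symm
  have hodcl : ∀ δ, L.Cn (od δ) = od δ := fun δ => (h2 δ).symm
  have hodcons : ∀ δ, L.Consistent (od δ) := h4 hKcons
  -- Lemma A: if `⊢ α → δ` then `¬δ ∉ K⊙δ`.
  have lemA : ∀ δ, L.wS α ⊆ L.wS δ → L.neg δ ∉ od δ := by
    intro δ hδ hmem
    apply hα
    have hnδ : L.neg δ ∈ L.Cn (od α) := by rw [hodcl]; exact h8 α δ hmem
    have himp : L.impl α δ ∈ L.Cn (od α) :=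
      L.cn_monotony ∅ (od α) (Set.empty_subset _) (impl_of_wS_subset hδ)
    have : L.neg α ∈ L.Cn (od α) := by
      refine taut2 hnδ himp ?_
      rintro v ⟨b0, bn, bc, bd, bi, bb⟩ t1 t2
      simp_all [bn, bi]
    rwa [hodcl] at this
  -- Lemma B: if `¬δ ∉ K⊙δ` then `‖K⊙δ‖ ∩ ‖δ‖ ≠ ∅`.
  have lemB : ∀ δ, L.neg δ ∉ od δ → (L.worldsOf (od δ) ∩ L.wS δ).Nonempty := by
    intro δ h
    exact inter_nonempty_of_neg_not_mem (by rwa [hodcl])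
  -- tautological implications for disjunction
  have timpl1 : ∀ δ β : L.Sentence, L.impl δ (L.disj δ β) ∈ L.Cn (∅ : Set L.Sentence) := by
    intro δ β
    apply taut0
    rintro v ⟨b0, bn, bc, bd, bi, bb⟩
    cases hd : v δ <;> cases hb : v β <;> simp [bi, bd, hd, hb]
  have timpl2 : ∀ δ β : L.Sentence, L.impl β (L.disj δ β) ∈ L.Cn (∅ : Set L.Sentence) := by
    intro δ β
    apply taut0
    rintro v ⟨b0, bn, bc, bd, bi, bb⟩
    cases hd : v δ <;> cases hb : v β <;> simp [bi, bd, hd, hb]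
  -- Sa is nonempty on ‖α‖
  have hne : ({w | ∃ δ, L.wS α ⊆ L.wS δ ∧ w ∈ L.worldsOf (od δ)} ∩ L.wS α).Nonempty := by
    obtain ⟨M, hM1, hM2⟩ := lemB α hα
    exact ⟨M, ⟨α, subset_rfl, hM1⟩, hM2⟩
  have hqual_sub : ∀ δ, L.wS α ⊆ L.wS δ →
      L.worldsOf (od δ) ⊆ {w | ∃ δ, L.wS α ⊆ L.wS δ ∧ w ∈ L.worldsOf (od δ)} :=
    fun δ hδ M hM => ⟨δ, hδ, hM⟩
  -- condition (iii)
  have hiii : ∀ β, ({w | ∃ δ, L.wS α ⊆ L.wS δ ∧ w ∈ L.worldsOf (od δ)} ∩ L.wS β).Nonempty →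
      L.worldsOf (od β) ⊆ {w | ∃ δ, L.wS α ⊆ L.wS δ ∧ w ∈ L.worldsOf (od δ)} := by
    rintro β ⟨w, hwSa, hwβ⟩
    obtain ⟨δ, hδq, hwδ⟩ := hwSa
    have hβw : β ∈ w := (mem_wS_iff.mp hwβ).2
    have hww : L.IsWorld w := hwδ.1
    have hnb : L.neg β ∉ od (L.disj δ β) := by
      intro hnb
      have hnd : L.neg δ ∈ od (L.disj δ β) := by
        by_contra hnd
        exact hww.not_mem_both hβw (hwδ.2 ((h11 δ β hnd) hnb))
      have hndb : L.neg (L.disj δ β) ∈ od (L.disj δ β) := by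
        rw [h2 (L.disj δ β)]
        refine taut2 (mem_cn hnd) (mem_cn hnb) ?_
        rintro v ⟨b0, bn, bc, bd, bi, bb⟩ t1 t2
        simp_all [bn, bd]
      apply lemA δ hδq
      rw [h2 δ]
      refine taut1 (mem_cn (h8 δ (L.disj δ β) hndb)) ?_
      rintro v ⟨b0, bn, bc, bd, bi, bb⟩ t1
      simp_all [bn, bd]
    have heq : od (L.disj δ β) = od (L.disj β δ) := by
      apply h6
      apply taut0
      rintro v ⟨b0, bn, bc, bd, bi, bb⟩
      simp [bb, bd, Bool.or_comm]
    have hsub : od (L.disj δ β) ⊆ od β := by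
      rw [heq]; exact h11 β δ (by rw [← heq]; exact hnb)
    intro M hM
    exact ⟨L.disj δ β, hδq.trans (wS_subset_of_impl (timpl1 δ β)), worldsOf_anti hsub hM⟩
  -- condition (iv)
  have hiv : ∀ β, {w | ∃ δ, L.wS α ⊆ L.wS δ ∧ w ∈ L.worldsOf (od δ)} ∩ L.wS β = ∅ →
      {w | ∃ δ, L.wS α ⊆ L.wS δ ∧ w ∈ L.worldsOf (od δ)} ∉ Si →
      L.worldsOf (od β) ∩ {w | ∃ δ, L.wS α ⊆ L.wS δ ∧ w ∈ L.worldsOf (od δ)} =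
        L.worldsOf K := by
    intro β hempty hnotSi
    have hnbq : ∀ δ, L.wS α ⊆ L.wS δ → L.neg β ∈ od δ := by
      intro δ hδ
      have hem : L.worldsOf (od δ) ∩ L.wS β = ∅ := by
        apply Set.eq_empty_of_subset_empty
        intro M hM
        rw [← hempty]
        exact ⟨hqual_sub δ hδ hM.1, hM.2⟩
      have := neg_mem_of_inter_empty hem
      rwa [hodcl] at this
    rw [hSi] at hnotSi
    have hδ0 : ∃ δ0, L.wS α ⊆ L.wS δ0 ∧ od δ0 ⊆ K ∧ δ0 ∉ od δ0 := by
      by_contra hcon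
      push_neg at hcon
      apply hnotSi
      right
      refine ⟨Set.Nonempty.mono Set.inter_subset_left hne, ?_, hiii⟩
      intro w hw
      obtain ⟨δ, hδq, hwδ⟩ := hw
      have hδs : δ ∈ od δ := by
        rcases h1 δ with h | h
        · exact h
        · exact hcon δ hδq h
      exact ⟨δ, hwδ, fun M hM => mem_wS_iff.mpr ⟨hM.1, hM.2 hδs⟩⟩
    obtain ⟨δ0, hδ0q, hδ0K, hδ0n⟩ := hδ0
    have hβnod : β ∉ od β := by
      intro hβ
      have hq : L.wS α ⊆ L.wS (L.disj δ0 β) :=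
        hδ0q.trans (wS_subset_of_impl (timpl1 δ0 β))
      have hsucc : L.disj δ0 β ∈ od (L.disj δ0 β) := h7 β (L.disj δ0 β) hβ (timpl2 δ0 β)
      have hnβ : L.neg β ∈ od (L.disj δ0 β) := hnbq _ hq
      have hd0 : δ0 ∈ od (L.disj δ0 β) := by
        rw [h2 (L.disj δ0 β)]
        refine taut2 (mem_cn hsucc) (mem_cn hnβ) ?_
        rintro v ⟨b0, bn, bc, bd, bi, bb⟩ t1 t2
        simp_all [bn, bd]
      by_cases hnd0 : L.neg δ0 ∈ od (L.disj δ0 β)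
      · apply hodcons (L.disj δ0 β)
        refine taut2 (mem_cn hd0) (mem_cn hnd0) ?_
        rintro v ⟨b0, bn, bc, bd, bi, bb⟩ t1 t2
        simp_all [bn]
      · exact hδ0n ((h11 δ0 β hnd0) hd0)
    have hodβK : od β ⊆ K := by
      rcases h1 β with h | h
      · exact absurd h hβnod
      · exact h
    apply Set.Subset.antisymm
    · rintro w ⟨hwβ, hwSa⟩
      obtain ⟨δ, hδq, hwδ⟩ := hwSa
      refine ⟨hwδ.1, ?_⟩
      have hnβw : L.neg β ∈ w := hwδ.2 (hnbq δ hδq)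
      intro φ hφ
      have hφ' := h9 β hφ
      have hsub : od β ∪ {L.neg β} ⊆ w :=
        Set.union_subset hwβ.2 (by simpa using hnβw)
      exact hwδ.1.mem_of_cn (L.cn_monotony _ _ hsub hφ')
    · intro w hw
      exact ⟨⟨hw.1, hodβK.trans hw.2⟩, δ0, hδ0q, hw.1, hδ0K.trans hw.2⟩
  refine ⟨?_, hne, ?_⟩
  · rw [hS]
    right
    refine ⟨Set.Nonempty.mono Set.inter_subset_left hne, ?_, hiii, hiv⟩
    intro w hw
    obtain ⟨δ, hδq, hwδ⟩ := hw
    exact ⟨δ, hwδ, lemB δ (lemA δ hδq)⟩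
  · intro V hV hVα
    rw [hS] at hV
    rcases hV with hVK | ⟨hVne, hVsub, hVcond, hVcond2⟩
    · subst hVK
      intro w hw
      obtain ⟨δ, hδq, hwδ⟩ := hw
      obtain ⟨M, hMK, hMα⟩ := hVα
      have hnαK : L.neg α ∉ K := by
        intro hc
        exact hMK.1.not_mem_both (mem_wS_iff.mp hMα).2 (hMK.2 hc)
      have hnδK : L.neg δ ∉ K := by
        intro hc
        apply hnαK
        rw [← hKcl] at hc ⊢
        refine taut2 hc (L.cn_monotony ∅ K (Set.empty_subset _)
          (impl_of_wS_subset hδq)) ?_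
        rintro v ⟨b0, bn, bc, bd, bi, bb⟩ t1 t2
        simp_all [bn, bi]
      have hKod : K ⊆ od δ := fun φ hφ =>
        h5 δ hnδK (L.cn_inclusion _ (Set.mem_union_left _ hφ))
      exact ⟨hwδ.1, hKod.trans hwδ.2⟩
    · intro w hw
      obtain ⟨δ, hδq, hwδ⟩ := hw
      obtain ⟨M, hM1, hM2⟩ := lemB α hα
      exact hVcond δ ⟨M, hVcond α hVα hM1, hδq hM2⟩ hwδ
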